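/- The cubic equation ς³ + (1 - k·q)·ς² - σ = 0 with σ > 0 and 0 < k < 1/3 has exactly one negative real root if and only if q = (1/k)·(1 - 3·(σ/4)^(1/3)). -/

import Mathlib

theorem stmt_2 (k q σ : ℝ) (hk : 0 < k) (hk' : k < 1/3) (hσ : 0 < σ) :
    (∃! ς : ℝ, ς < 0 ∧ ς^3 + (1 - k*q)*ς^2 - σ = 0) ↔
      q = (1/k) * (1 - 3 * (σ/4) ^ ((1:ℝ)/3)) := by
  have hk0 : k ≠ 0 := ne_of_gt hk
  set c : ℝ := (σ/4) ^ ((1:ℝ)/3) with hc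
  have hcpos : 0 < c := Real.rpow_pos_of_pos (by linarith) _
  have hc3 : c^3 = σ/4 := by
    rw [hc, ← Real.rpow_natCast ((σ/4) ^ ((1:ℝ)/3)) 3, ← Real.rpow_mul (by positivity)]
    norm_num
  have hq : q = (1/k) * (1 - 3*c) ↔ 1 - k*q = 3*c := by
    constructor
    · intro h; rw [h]; field_simp; ring
    · intro h; field_simp; linarith
  rw [hq]
  constructor
  · rintro ⟨x, ⟨hx0, hxe⟩, huniq⟩
    have hapos : 0 < 1 - k*q := by
      by_contra h
      push_neg at h
      nlinarith [mul_pos (mul_pos (neg_pos.2 hx0) (neg_pos.2 hx0)) (neg_pos.2 hx0),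
        mul_nonneg (neg_nonneg.2 h) (sq_nonneg x)]
    obtain ⟨A, hA⟩ : ∃ A : ℝ, A = 1 - k*q := ⟨_, rfl⟩
    rw [← hA] at hxe huniq hapos hq ⊢
    have hle : 27*σ ≤ 4*A^3 := by
      nlinarith [mul_nonneg (sq_nonneg (3*x + 2*A)) (by linarith : (0:ℝ) ≤ A - 3*x)]
    have heq : 4*A^3 = 27*σ := by
      by_contra hne
      have hlt : 27*σ < 4*A^3 := lt_of_le_of_ne hle (Ne.symm hne)
      set f : ℝ → ℝ := fun t => t^3 + A*t^2 - σ with hf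
      have hcont : Continuous f := by fun_prop
      have h1 : (0:ℝ) ∈ Set.Ioo (f (-A)) (f (-(2*A/3))) := by
        constructor <;> simp only [hf] <;> nlinarith
      have h2 : (0:ℝ) ∈ Set.Ioo (f 0) (f (-(2*A/3))) := by
        constructor <;> simp only [hf] <;> nlinarith
      obtain ⟨y, hy, hfy⟩ := intermediate_value_Ioo (by nlinarith : -A ≤ -(2*A/3))
        hcont.continuousOn h1
      obtain ⟨z, hz, hfz⟩ := intermediate_value_Ioo' (by nlinarith : -(2*A/3) ≤ 0)
        hcont.continuousOn h2
      have hyx : y = x := huniq y ⟨by nlinarith [hy.2], by simpa [hf] using hfy⟩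
      have hzx : z = x := huniq z ⟨hz.2, by simpa [hf] using hfz⟩
      have : y < z := lt_trans hy.2 hz.1
      rw [hyx, hzx] at this
      exact lt_irrefl _ this
    have hcube : A^3 = (3*c)^3 := by nlinarith
    nlinarith [sq_nonneg (A - 3*c), sq_nonneg (A + 3*c), mul_pos hapos hcpos]
  · intro hA
    refine ⟨-2*c, ⟨by linarith, by linear_combination 4*c^2*hA + 4*hc3⟩, ?_⟩
    rintro y ⟨hy0, hye⟩
    have hfac : (y - c) * (y + 2*c)^2 = 0 := by
      linear_combination hye - y^2*hA - 4*hc3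
    rcases mul_eq_zero.mp hfac with h | h
    · exfalso; nlinarith
    · have h0 : y + 2*c = 0 := by
        have := sq_eq_zero_iff.mp h
        linarith [this]
      linarith
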